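/- Let φ and ψ be unital linear functionals on ℂ⟨x₁, x₂, …⟩, and let σ be the unital algebra endomorphism of ℂ⟨x₁, x₂, …⟩ with σ(xⱼ) = x_{j+1} for all j. Then there exists a unique sequence of elements A₀, A₁, A₂, … of ℂ⟨x₁, x₂, …⟩ such that A₀ = 1 and, for every k ≥ 1: φ(Aₖ) = 0, and for every i ≥ 1, (ψ ⊗ id)(∂ᵢ Aₖ) = σ(A_{k−1}) if i = 1 and (ψ ⊗ id)(∂ᵢ Aₖ) = 0 if i ≠ 1. (These are the c-free Appell polynomials A^{φ,ψ}(x₁, …, xₖ) of the pair (φ, ψ).) -/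

import Mathlib

open TensorProduct

/-- The product `x_{u(1)} ⋯ x_{u(n)}` of generators of the free algebra along a word. -/
noncomputable def wordProd (l : List ℕ) : FreeAlgebra ℂ ℕ :=
  (l.map (FreeAlgebra.ι ℂ)).prod

/-- The partial difference quotient `∂ᵢ`, the ℂ-linear map determined on the basis of
words by `∂ᵢ(x_{u(1)}⋯x_{u(n)}) = Σ_{j : u(j) = i} x_{u(1)}⋯x_{u(j−1)} ⊗ x_{u(j+1)}⋯x_{u(n)}`
(here `i` indexes the generator `FreeAlgebra.ι ℂ i`). -/
noncomputable def dq (i : ℕ) :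
    FreeAlgebra ℂ ℕ →ₗ[ℂ] FreeAlgebra ℂ ℕ ⊗[ℂ] FreeAlgebra ℂ ℕ :=
  (FreeAlgebra.basisFreeMonoid ℂ ℕ).constr ℂ fun w =>
    ∑ j ∈ Finset.range (FreeMonoid.toList w).length,
      if (FreeMonoid.toList w).getD j 0 = i then
        wordProd ((FreeMonoid.toList w).take j) ⊗ₜ[ℂ]
          wordProd ((FreeMonoid.toList w).drop (j + 1))
      else 0

/-- The map `(id ⊗ ψ) : a ⊗ b ↦ ψ(b)·a`. -/
noncomputable def idTensor (ψ : FreeAlgebra ℂ ℕ →ₗ[ℂ] ℂ) :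
    FreeAlgebra ℂ ℕ ⊗[ℂ] FreeAlgebra ℂ ℕ →ₗ[ℂ] FreeAlgebra ℂ ℕ :=
  TensorProduct.lift
    { toFun := fun a => ψ.smulRight a
      map_add' := by intro a b; ext c; simp
      map_smul' := by
        intro c a
        ext b
        simp only [LinearMap.smulRight_apply, LinearMap.smul_apply, RingHom.id_apply]
        rw [smul_comm] }

/-- The map `(ψ ⊗ id) : a ⊗ b ↦ ψ(a)·b`. -/
noncomputable def tensorId (ψ : FreeAlgebra ℂ ℕ →ₗ[ℂ] ℂ) :
    FreeAlgebra ℂ ℕ ⊗[ℂ] FreeAlgebra ℂ ℕ →ₗ[ℂ] FreeAlgebra ℂ ℕ :=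
  TensorProduct.lift
    { toFun := fun a => ψ a • (LinearMap.id : FreeAlgebra ℂ ℕ →ₗ[ℂ] FreeAlgebra ℂ ℕ)
      map_add' := by intro a b; simp [add_smul]
      map_smul' := by intro c a; simp [smul_smul] }

/-- The shift endomorphism `σ` of `ℂ⟨x₁, x₂, …⟩` with `σ(xⱼ) = x_{j+1}`, i.e. the unital
algebra endomorphism sending the generator `ι m` to `ι (m+1)`. -/
noncomputable def shiftHom : FreeAlgebra ℂ ℕ →ₐ[ℂ] FreeAlgebra ℂ ℕ :=
  FreeAlgebra.lift ℂ fun j => FreeAlgebra.ι ℂ (j + 1)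

/- ### Auxiliary lemmas -/

@[simp] lemma wordProd_nil : wordProd [] = 1 := rfl

@[simp] lemma wordProd_cons (a : ℕ) (l : List ℕ) :
    wordProd (a :: l) = FreeAlgebra.ι ℂ a * wordProd l := by
  simp [wordProd]

lemma equiv_symm_single (w : FreeMonoid ℕ) :
    (FreeAlgebra.equivMonoidAlgebraFreeMonoid (R := ℂ) (X := ℕ)).symm
      (MonoidAlgebra.single w 1) = wordProd (FreeMonoid.toList w) := by
  induction w using FreeMonoid.recOn with
  | one =>
    have : (MonoidAlgebra.single (1 : FreeMonoid ℕ) (1:ℂ)) = 1 := rfl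
    rw [this, map_one]
    rfl
  | of_mul x xs ih =>
    rw [show (MonoidAlgebra.single (FreeMonoid.of x * xs) (1:ℂ)) =
        MonoidAlgebra.single (FreeMonoid.of x) 1 * MonoidAlgebra.single xs 1 by
      rw [MonoidAlgebra.single_mul_single, one_mul], map_mul, ih]
    congr 1
    rw [AlgEquiv.symm_apply_eq]
    simp [FreeAlgebra.equivMonoidAlgebraFreeMonoid, MonoidAlgebra.of_apply]

lemma basis_apply (w : FreeMonoid ℕ) :
    FreeAlgebra.basisFreeMonoid ℂ ℕ w = wordProd (FreeMonoid.toList w) := by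
  simp only [FreeAlgebra.basisFreeMonoid, Module.Basis.map_apply, Finsupp.coe_basisSingleOne]
  exact equiv_symm_single w

lemma wordProd_eq_basis (l : List ℕ) :
    wordProd l = FreeAlgebra.basisFreeMonoid ℂ ℕ (FreeMonoid.ofList l) := by
  rw [basis_apply]; rfl

@[simp] lemma tensorId_tmul (ψ : FreeAlgebra ℂ ℕ →ₗ[ℂ] ℂ) (a b : FreeAlgebra ℂ ℕ) :
    tensorId ψ (a ⊗ₜ[ℂ] b) = ψ a • b := rfl

lemma dq_wordProd (i : ℕ) (l : List ℕ) :
    dq i (wordProd l) = ∑ j ∈ Finset.range l.length,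
      if l.getD j 0 = i then wordProd (l.take j) ⊗ₜ[ℂ] wordProd (l.drop (j + 1)) else 0 := by
  rw [wordProd_eq_basis, dq, Module.Basis.constr_basis]
  rfl

@[simp] lemma dq_one (i : ℕ) : dq i (1 : FreeAlgebra ℂ ℕ) = 0 := by
  simpa using dq_wordProd i []

lemma F_wordProd (ψ : FreeAlgebra ℂ ℕ →ₗ[ℂ] ℂ) (i : ℕ) (l : List ℕ) :
    tensorId ψ (dq i (wordProd l)) = ∑ j ∈ Finset.range l.length,
      if l.getD j 0 = i then ψ (wordProd (l.take j)) • wordProd (l.drop (j + 1)) else 0 := by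
  rw [dq_wordProd, map_sum]
  refine Finset.sum_congr rfl fun j _ => ?_
  split <;> simp

lemma F_cons (ψ : FreeAlgebra ℂ ℕ →ₗ[ℂ] ℂ) (hψ1 : ψ 1 = 1) (i i₀ : ℕ) (w : List ℕ) :
    tensorId ψ (dq i (FreeAlgebra.ι ℂ i₀ * wordProd w)) =
      (∑ j ∈ Finset.range w.length,
        if w.getD j 0 = i then
          ψ (FreeAlgebra.ι ℂ i₀ * wordProd (w.take j)) • wordProd (w.drop (j + 1)) else 0)
      + (if i = i₀ then wordProd w else 0) := by
  rw [← wordProd_cons, F_wordProd]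
  rw [show (i₀ :: w).length = w.length + 1 from rfl,
    Finset.sum_range_succ' (fun j => if (i₀ :: w).getD j 0 = i then
      ψ (wordProd ((i₀ :: w).take j)) • wordProd ((i₀ :: w).drop (j + 1)) else 0) w.length]
  have h1 : ∀ j ∈ Finset.range w.length,
      (if (i₀ :: w).getD (j+1) 0 = i then
        ψ (wordProd ((i₀ :: w).take (j+1))) • wordProd ((i₀ :: w).drop (j + 1 + 1)) else 0)
      = (if w.getD j 0 = i then
        ψ (FreeAlgebra.ι ℂ i₀ * wordProd (w.take j)) • wordProd (w.drop (j + 1)) else 0) := by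
    intro j _
    simp only [List.getD_cons_succ, List.take_succ_cons, List.drop_succ_cons, wordProd_cons]
  have h2 : (if (i₀ :: w).getD 0 0 = i then
      ψ (wordProd ((i₀ :: w).take 0)) • wordProd ((i₀ :: w).drop (0 + 1)) else 0)
      = (if i = i₀ then wordProd w else 0) := by
    by_cases h : i = i₀ <;> simp [h, eq_comm, hψ1]
  rw [Finset.sum_congr rfl h1, h2]

/-- The solution operator on words: `SolWord ψ i₀ w` is the element `P` with
`(ψ⊗id)(∂ᵢ P) = δ_{i,i₀} wordProd w`. -/
noncomputable def SolWord (ψ : FreeAlgebra ℂ ℕ →ₗ[ℂ] ℂ) : ℕ → List ℕ → FreeAlgebra ℂ ℕ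
  | i₀, w => FreeAlgebra.ι ℂ i₀ * wordProd w -
      ∑ j ∈ (Finset.range w.length).attach,
        ψ (FreeAlgebra.ι ℂ i₀ * wordProd (w.take j.1)) • SolWord ψ (w.getD j.1 0) (w.drop (j.1+1))
  termination_by _ w => w.length
  decreasing_by simp_wf; have : j.1 < w.length := Finset.mem_range.mp j.2; omega

lemma SolWord_eq (ψ : FreeAlgebra ℂ ℕ →ₗ[ℂ] ℂ) (i₀ : ℕ) (w : List ℕ) :
    SolWord ψ i₀ w = FreeAlgebra.ι ℂ i₀ * wordProd w -
      ∑ j ∈ Finset.range w.length,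
        ψ (FreeAlgebra.ι ℂ i₀ * wordProd (w.take j)) • SolWord ψ (w.getD j 0) (w.drop (j+1)) := by
  rw [SolWord]
  congr 1
  exact Finset.sum_attach (Finset.range w.length)
    (fun j => ψ (FreeAlgebra.ι ℂ i₀ * wordProd (w.take j)) • SolWord ψ (w.getD j 0) (w.drop (j+1)))

lemma F_SolWord (ψ : FreeAlgebra ℂ ℕ →ₗ[ℂ] ℂ) (hψ1 : ψ 1 = 1) :
    ∀ n (w : List ℕ), w.length ≤ n → ∀ i i₀ : ℕ,
      tensorId ψ (dq i (SolWord ψ i₀ w)) = if i = i₀ then wordProd w else 0 := by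
  intro n
  induction n with
  | zero =>
    intro w hw i i₀
    rw [List.length_eq_zero_iff.mp (Nat.le_zero.mp hw)]
    rw [SolWord_eq]
    simp only [List.length_nil, Finset.range_zero, Finset.sum_empty, sub_zero]
    rw [F_cons ψ hψ1]
    simp
  | succ n ih =>
    intro w hw i i₀
    rw [SolWord_eq, map_sub, map_sub, F_cons ψ hψ1, map_sum, map_sum]
    have hsum : ∀ j ∈ Finset.range w.length,
        tensorId ψ (dq i (ψ (FreeAlgebra.ι ℂ i₀ * wordProd (w.take j)) •
            SolWord ψ (w.getD j 0) (w.drop (j+1)))) =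
          if w.getD j 0 = i then
            ψ (FreeAlgebra.ι ℂ i₀ * wordProd (w.take j)) • wordProd (w.drop (j + 1)) else 0 := by
      intro j hj
      have hj' : j < w.length := Finset.mem_range.mp hj
      have hlen : (w.drop (j+1)).length ≤ n := by
        rw [List.length_drop]; omega
      rw [map_smul, map_smul, ih (w.drop (j+1)) hlen i (w.getD j 0), smul_ite, smul_zero]
      exact if_congr eq_comm rfl rfl
    rw [Finset.sum_congr rfl hsum]
    abel

/-- Linear extension of `SolWord`. -/
noncomputable def Sol (ψ : FreeAlgebra ℂ ℕ →ₗ[ℂ] ℂ) (i₀ : ℕ) :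
    FreeAlgebra ℂ ℕ →ₗ[ℂ] FreeAlgebra ℂ ℕ :=
  (FreeAlgebra.basisFreeMonoid ℂ ℕ).constr ℂ fun w => SolWord ψ i₀ (FreeMonoid.toList w)

lemma F_Sol (ψ : FreeAlgebra ℂ ℕ →ₗ[ℂ] ℂ) (hψ1 : ψ 1 = 1) (i i₀ : ℕ)
    (g : FreeAlgebra ℂ ℕ) :
    tensorId ψ (dq i (Sol ψ i₀ g)) = if i = i₀ then g else 0 := by
  have key : ((tensorId ψ) ∘ₗ (dq i) ∘ₗ (Sol ψ i₀)) =
      (if i = i₀ then (LinearMap.id : FreeAlgebra ℂ ℕ →ₗ[ℂ] FreeAlgebra ℂ ℕ) else 0) := by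
    refine Module.Basis.ext (FreeAlgebra.basisFreeMonoid ℂ ℕ) (fun w => ?_)
    simp only [LinearMap.comp_apply, Sol, Module.Basis.constr_basis]
    rw [F_SolWord ψ hψ1 (FreeMonoid.toList w).length _ le_rfl, basis_apply]
    by_cases h : i = i₀ <;> simp [h]
  have := congrFun (congrArg DFunLike.coe key) g
  simp only [LinearMap.comp_apply] at this
  rw [this]
  by_cases h : i = i₀ <;> simp [h]

@[simp] lemma F_one (ψ : FreeAlgebra ℂ ℕ →ₗ[ℂ] ℂ) (i : ℕ) :
    tensorId ψ (dq i (1 : FreeAlgebra ℂ ℕ)) = 0 := by simp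

/-- The c-free Appell sequence. -/
noncomputable def appell (φ ψ : FreeAlgebra ℂ ℕ →ₗ[ℂ] ℂ) : ℕ → FreeAlgebra ℂ ℕ
  | 0 => 1
  | k+1 => Sol ψ 0 (shiftHom (appell φ ψ k)) - φ (Sol ψ 0 (shiftHom (appell φ ψ k))) • 1


section Uniqueness
open FreeMonoid
open scoped Classical
variable (ψ : FreeAlgebra ℂ ℕ →ₗ[ℂ] ℂ)

lemma coeff_eq (hψ1 : ψ 1 = 1) (i : ℕ) (t : List ℕ) (w : FreeMonoid ℕ)
    (hlen : (toList w).length ≤ t.length + 1) :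
    ((FreeAlgebra.basisFreeMonoid ℂ ℕ).repr
        (tensorId ψ (dq i ((FreeAlgebra.basisFreeMonoid ℂ ℕ) w)))) (ofList t)
      = if w = ofList (i :: t) then 1 else 0 := by
  set b := FreeAlgebra.basisFreeMonoid ℂ ℕ with hb
  set lw := toList w with hlw
  rw [basis_apply, F_wordProd, map_sum, Finset.sum_apply']
  have hterm : ∀ j ∈ Finset.range lw.length,
      (b.repr (if lw.getD j 0 = i then
          ψ (wordProd (lw.take j)) • wordProd (lw.drop (j+1)) else 0)) (ofList t)
      = if lw.getD j 0 = i then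
          (if lw.drop (j+1) = t then ψ (wordProd (lw.take j)) else 0) else 0 := by
    intro j _
    by_cases h : lw.getD j 0 = i
    · rw [if_pos h, if_pos h, map_smul, Finsupp.smul_apply]
      rw [show wordProd (lw.drop (j+1)) = b (ofList (lw.drop (j+1))) by
        rw [basis_apply, toList_ofList]]
      rw [b.repr_self, Finsupp.single_apply]
      by_cases h2 : lw.drop (j+1) = t
      · simp [h2]
      · rw [if_neg h2, if_neg (fun hh => h2 (by simpa using congrArg toList hh)), smul_zero]
    · rw [if_neg h, if_neg h, map_zero, Finsupp.coe_zero, Pi.zero_apply]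
  rw [Finset.sum_congr rfl hterm]
  by_cases hw : w = ofList (i :: t)
  · rw [if_pos hw]
    have hlw' : lw = i :: t := by rw [hlw, hw, toList_ofList]
    rw [hlw']
    rw [show (i :: t).length = t.length + 1 from rfl]
    rw [Finset.sum_eq_single_of_mem 0 (Finset.mem_range.mpr (Nat.succ_pos _))]
    · simp [wordProd_nil, hψ1]
    · intro j hj hj0
      have hj' : j < t.length + 1 := Finset.mem_range.mp hj
      have : ¬ ((i :: t).drop (j+1) = t) := by
        intro hdrop
        have := congrArg List.length hdrop
        simp [List.length_drop] at this
        omega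
      simp only [this, if_neg, ite_self]
      split <;> simp [this]
  · rw [if_neg hw]
    refine Finset.sum_eq_zero fun j hj => ?_
    have hj' : j < lw.length := Finset.mem_range.mp hj
    by_cases h : lw.getD j 0 = i
    · rw [if_pos h]
      by_cases h2 : lw.drop (j+1) = t
      · exfalso
        have hlen2 : lw.length - (j+1) = t.length := by
          rw [← h2, List.length_drop]
        have hj0 : j = 0 := by omega
        have hlwlen : lw.length = t.length + 1 := by omega
        obtain ⟨a, l', hal⟩ := List.exists_cons_of_ne_nil
          (show lw ≠ [] by intro hnil; rw [hnil] at hlwlen; simp at hlwlen)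
        subst hj0
        rw [hal] at h h2
        simp at h h2
        apply hw
        rw [← FreeMonoid.ofList_toList w, ← hlw, hal, h, h2]
      · rw [if_neg h2]
    · rw [if_neg h]


lemma repr_coeff_zero (hψ1 : ψ 1 = 1) (D : FreeAlgebra ℂ ℕ)
    (i : ℕ) (t : List ℕ)
    (hlen : ∀ v ∈ ((FreeAlgebra.basisFreeMonoid ℂ ℕ).repr D).support,
      (toList v).length ≤ t.length + 1)
    (h : tensorId ψ (dq i D) = 0) :
    ((FreeAlgebra.basisFreeMonoid ℂ ℕ).repr D) (ofList (i :: t)) = 0 := by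
  set b := FreeAlgebra.basisFreeMonoid ℂ ℕ with hb
  set c := b.repr D with hc
  have hD : D = ∑ w ∈ c.support, c w • b w := by
    conv_lhs => rw [← b.linearCombination_repr D]
    rw [Finsupp.linearCombination_apply, Finsupp.sum]
  have h0 : (b.repr (tensorId ψ (dq i D))) (ofList t) = 0 := by rw [h]; simp
  rw [hD] at h0
  rw [map_sum, map_sum, map_sum, Finset.sum_apply'] at h0
  have : ∀ w ∈ c.support,
      (b.repr (tensorId ψ (dq i (c w • b w)))) (ofList t)
        = if w = ofList (i :: t) then c w else 0 := by
    intro w hw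
    rw [map_smul, map_smul, map_smul, Finsupp.smul_apply,
      coeff_eq ψ hψ1 i t w (hlen w hw), smul_ite, smul_zero, smul_eq_mul, mul_one]
  rw [Finset.sum_congr rfl this,
    Finset.sum_ite_eq' c.support (ofList (i :: t)) (fun w => c w)] at h0
  by_cases hmem : ofList (i :: t) ∈ c.support
  · rwa [if_pos hmem] at h0
  · exact Finsupp.notMem_support_iff.mp hmem


lemma exists_smul_one (hψ1 : ψ 1 = 1) (D : FreeAlgebra ℂ ℕ)
    (h : ∀ i, tensorId ψ (dq i D) = 0) : ∃ c : ℂ, D = c • 1 := by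
  set b := FreeAlgebra.basisFreeMonoid ℂ ℕ with hb
  set S := (b.repr D).support with hS
  have hD : D = ∑ w ∈ S, (b.repr D) w • b w := by
    conv_lhs => rw [← b.linearCombination_repr D]
    rw [Finsupp.linearCombination_apply, Finsupp.sum]
  by_cases hzero : ∀ v ∈ S, (toList v).length = 0
  · refine ⟨(b.repr D) (ofList []), ?_⟩
    have hsub : S ⊆ {ofList []} := by
      intro v hv
      have h1 : toList v = [] := List.length_eq_zero_iff.mp (hzero v hv)
      have : v = ofList [] := by rw [← h1, ofList_toList]
      simp [this]
    conv_lhs => rw [hD]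
    rw [Finset.sum_subset hsub (fun x _ hx => by
      rw [Finsupp.notMem_support_iff.mp hx, zero_smul])]
    rw [Finset.sum_singleton, basis_apply, toList_ofList, wordProd_nil]
  · push_neg at hzero
    obtain ⟨v₀, hv₀S, hv₀⟩ := hzero
    exfalso
    set T := S.image (fun v => (toList v).length) with hT
    have hTne : T.Nonempty := ⟨(toList v₀).length, Finset.mem_image_of_mem _ hv₀S⟩
    obtain ⟨u, huS, hulen⟩ := Finset.mem_image.mp (T.max'_mem hTne)
    have hmax : ∀ v ∈ S, (toList v).length ≤ (toList u).length := by
      intro v hv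
      rw [hulen]
      exact T.le_max' _ (Finset.mem_image_of_mem _ hv)
    have hm1 : 1 ≤ (toList u).length := by
      calc 1 ≤ (toList v₀).length := Nat.one_le_iff_ne_zero.mpr hv₀
        _ ≤ _ := hmax v₀ hv₀S
    obtain ⟨a, t, hat⟩ := List.exists_cons_of_ne_nil
      (show toList u ≠ [] by
        intro hnil
        rw [hnil] at hm1
        simp at hm1)
    have hlen : ∀ v ∈ S, (toList v).length ≤ t.length + 1 := by
      intro v hv
      have h1 := hmax v hv
      have h2 : (toList u).length = t.length + 1 := by rw [hat]; rfl
      omega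
    have := repr_coeff_zero ψ hψ1 D a t hlen (h a)
    rw [show ofList (a :: t) = u by rw [← hat, ofList_toList]] at this
    exact Finsupp.notMem_support_iff.mpr this huS

end Uniqueness

/-- with the convention `x_j := FreeAlgebra.ι ℂ (j − 1)`, so `∂₁ = dq 0`:
for unital linear functionals `φ, ψ` on `ℂ⟨x₁, x₂, …⟩` there is a unique sequence
`A₀ = 1, A₁, A₂, …` with `φ(Aₖ) = 0` for `k ≥ 1` and
`(ψ ⊗ id)(∂ᵢ Aₖ) = σ(A_{k−1})` if `i = 1`, `= 0` otherwise — the c-free Appell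
polynomials of the pair `(φ, ψ)`. -/
theorem cfree_appell_exists_unique (φ ψ : FreeAlgebra ℂ ℕ →ₗ[ℂ] ℂ)
    (hφ1 : φ 1 = 1) (hψ1 : ψ 1 = 1) :
    ∃! A : ℕ → FreeAlgebra ℂ ℕ, A 0 = 1 ∧
      ∀ k, 1 ≤ k → φ (A k) = 0 ∧
        ∀ i : ℕ, tensorId ψ (dq i (A k)) = if i = 0 then shiftHom (A (k - 1)) else 0 := by
  have hF : ∀ (C : FreeAlgebra ℂ ℕ) (c : ℂ) (i : ℕ),
      tensorId ψ (dq i (C - c • 1)) = tensorId ψ (dq i C) := by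
    intro C c i
    rw [map_sub, map_smul, dq_one, smul_zero, sub_zero]
  have hspec : ∀ k, φ (appell φ ψ (k+1)) = 0 ∧
      ∀ i : ℕ, tensorId ψ (dq i (appell φ ψ (k+1))) =
        if i = 0 then shiftHom (appell φ ψ k) else 0 := by
    intro k
    constructor
    · show φ (_ - _ • 1) = 0
      rw [map_sub, map_smul, hφ1, smul_eq_mul, mul_one, sub_self]
    · intro i
      show tensorId ψ (dq i (_ - _ • 1)) = _
      rw [hF, F_Sol ψ hψ1]
  refine ⟨appell φ ψ, ⟨rfl, ?_⟩, ?_⟩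
  · intro k hk
    obtain ⟨m, rfl⟩ : ∃ m, k = m + 1 := ⟨k - 1, by omega⟩
    exact ⟨(hspec m).1, fun i => by rw [(hspec m).2 i]; rfl⟩
  · rintro B ⟨hB0, hB⟩
    funext k
    induction k with
    | zero => rw [hB0]; rfl
    | succ k ih =>
      have h1 := hB (k+1) (Nat.succ_le_succ (Nat.zero_le _))
      have hFD : ∀ i, tensorId ψ (dq i (B (k+1) - appell φ ψ (k+1))) = 0 := by
        intro i
        rw [map_sub, map_sub, h1.2 i, (hspec k).2 i, show k + 1 - 1 = k from rfl, ih, sub_self]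
      obtain ⟨c, hc⟩ := exists_smul_one ψ hψ1 _ hFD
      have hφD : φ (B (k+1) - appell φ ψ (k+1)) = 0 := by
        rw [map_sub, h1.1, (hspec k).1, sub_self]
      rw [hc, map_smul, hφ1, smul_eq_mul, mul_one] at hφD
      rw [hφD, zero_smul] at hc
      exact sub_eq_zero.mp hc
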